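/- Let f : ℝ³ → [0,∞) be measurable, not almost everywhere zero, with ∫_{ℝ³} |p| f(p) dp < ∞, and let h ∈ ℝ³. If B ∈ Sym3 is positive definite and the Fuchsian condition at B holds, then hᵀAh < (det A)/2, where A = B⁻¹. -/

import Mathlib

open MeasureTheory Matrix Real Filter Topology Set Asymptotics

noncomputable section

/-- 3×3 real matrices; symmetric ones form `Sym3`, encoded via `Matrix.IsSymm`/`Matrix.PosDef`. -/
abbrev Mat3 := Matrix (Fin 3) (Fin 3) ℝ

/-- vectors in ℝ³ -/
abbrev Vec3 := Fin 3 → ℝ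

/-- Euclidean norm on ℝ³. -/
def enorm3 (p : Vec3) : ℝ := Real.sqrt (∑ i, p i ^ 2)

/-- the quadratic form pᵀBp. -/
def quadForm (B : Mat3) (p : Vec3) : ℝ := p ⬝ᵥ B.mulVec p

/-- Ψ(B)_{ij} = 4π (det B)^{1/2} ∫ (pᵀBp)^{−1/2} p_i p_j f(p) dp. -/
def PsiM (f : Vec3 → ℝ) (B : Mat3) : Mat3 :=
  Matrix.of fun i j =>
    (4 * π) * Real.sqrt B.det * ∫ p : Vec3, (Real.sqrt (quadForm B p))⁻¹ * (p i * p j * f p)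

/-- χ_b(k)_{ij} = 4π (det b)^{1/2} ∫ (pᵀbp)^{−3/2} ((bp)ᵀ k (bp)) p_i p_j f(p) dp. -/
def chiM (f : Vec3 → ℝ) (b : Mat3) (k : Mat3) : Mat3 :=
  Matrix.of fun i j =>
    (4 * π) * Real.sqrt b.det *
      ∫ p : Vec3, ((Real.sqrt (quadForm b p))⁻¹ ^ 3) * (quadForm k (b.mulVec p) * (p i * p j * f p))

/-- With u = ah, w = kh, α = hᵀah and b = a⁻¹:
M_a(k) = (2/det a)((hᵀkh) a + α k − 2(u wᵀ + w uᵀ) + tr(bk)(2 u uᵀ − α a)). -/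
def MM (a : Mat3) (h : Vec3) (k : Mat3) : Mat3 :=
  (2 / a.det) • ((h ⬝ᵥ k.mulVec h) • a + (h ⬝ᵥ a.mulVec h) • k
    - (2:ℝ) • (vecMulVec (a.mulVec h) (k.mulVec h) + vecMulVec (k.mulVec h) (a.mulVec h))
    + (a⁻¹ * k).trace • ((2:ℝ) • vecMulVec (a.mulVec h) (a.mulVec h) - (h ⬝ᵥ a.mulVec h) • a))

/-- The Fuchsian condition at B (with A = B⁻¹):
2Ψ(B) = A − (2/det A)((hᵀAh) A − 2 (Ah)(Ah)ᵀ). -/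
def FuchsCond (f : Vec3 → ℝ) (h : Vec3) (B : Mat3) : Prop :=
  (2:ℝ) • PsiM f B =
    B⁻¹ - (2 / (B⁻¹).det) •
      ((h ⬝ᵥ (B⁻¹).mulVec h) • B⁻¹ - (2:ℝ) • vecMulVec ((B⁻¹).mulVec h) ((B⁻¹).mulVec h))

/-- F(B) = 16π ∫ (pᵀBp)^{1/2} f dp + 2 (det B)^{−1/2} + 4 (det B)^{1/2} hᵀB⁻¹h. -/
def Ffun (f : Vec3 → ℝ) (h : Vec3) (B : Mat3) : ℝ :=
  16 * π * (∫ p : Vec3, Real.sqrt (quadForm B p) * f p)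
    + 2 * (Real.sqrt B.det)⁻¹ + 4 * Real.sqrt B.det * (h ⬝ᵥ (B⁻¹).mulVec h)

lemma my_enorm3_nonneg (p : Vec3) : 0 ≤ enorm3 p := Real.sqrt_nonneg _

lemma my_abs_le_enorm3 (p : Vec3) (i : Fin 3) : |p i| ≤ enorm3 p := by
  have h1 : p i ^ 2 ≤ ∑ j, p j ^ 2 :=
    Finset.single_le_sum (f := fun j => p j ^ 2) (fun j _ => sq_nonneg _) (Finset.mem_univ i)
  calc |p i| = Real.sqrt (p i ^ 2) := (Real.sqrt_sq_eq_abs _).symm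
    _ ≤ enorm3 p := Real.sqrt_le_sqrt h1

lemma my_dot_mulVec (M : Mat3) (x y : Vec3) :
    x ⬝ᵥ M.mulVec y = ∑ i, ∑ j, x i * (M i j * y j) := by
  simp [dotProduct, Matrix.mulVec, Finset.mul_sum]

lemma my_trace_mul (M N : Mat3) : (M * N).trace = ∑ i, ∑ j, M i j * N j i := by
  simp [Matrix.trace, Matrix.diag, Matrix.mul_apply]

lemma my_measurable_quadForm (B : Mat3) : Measurable (quadForm B) := by
  have : quadForm B = fun p => ∑ i, ∑ j, p i * (B i j * p j) := by
    funext p; exact my_dot_mulVec B p p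
  rw [this]
  exact Finset.measurable_sum _ fun i _ => Finset.measurable_sum _ fun j _ =>
    (measurable_pi_apply i).mul (measurable_const.mul (measurable_pi_apply j))

lemma my_dot_swap {B : Mat3} (hsym : Bᵀ = B) (p q : Vec3) :
    p ⬝ᵥ B.mulVec q = q ⬝ᵥ B.mulVec p := by
  rw [dotProduct_mulVec, ← hsym, vecMul_transpose, dotProduct_comm, hsym]

lemma my_quad_expand {B : Mat3} (hsym : Bᵀ = B) (a b : ℝ) (p u : Vec3) :
    quadForm B (a • p - b • u)
      = a ^ 2 * quadForm B p - 2 * a * b * (u ⬝ᵥ B.mulVec p) + b ^ 2 * quadForm B u := by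
  have hswap := my_dot_swap hsym p u
  simp only [quadForm, Matrix.mulVec_sub, Matrix.mulVec_smul, dotProduct_sub,
    sub_dotProduct, dotProduct_smul, smul_dotProduct, smul_eq_mul]
  rw [hswap]; ring

lemma my_cs {B : Mat3} (hB : B.PosDef) (u p : Vec3) :
    (u ⬝ᵥ B.mulVec p) ^ 2 ≤ quadForm B u * quadForm B p := by
  have hsym : Bᵀ = B := hB.1
  have hQnn : ∀ x, 0 ≤ quadForm B x := fun x => by
    have := hB.posSemidef.dotProduct_mulVec_nonneg x; simpa [quadForm] using this
  by_cases hu : u = 0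
  · subst hu; simp [quadForm]
  · have hQu : 0 < quadForm B u := by
      have := hB.dotProduct_mulVec_pos hu; simpa [quadForm] using this
    set s := u ⬝ᵥ B.mulVec p with hs
    have hexp := my_quad_expand hsym (quadForm B u) s p u
    have hnn := hQnn (quadForm B u • p - s • u)
    rw [hexp] at hnn
    nlinarith [hnn, hQu, hQnn p]

lemma my_cs_strict {B : Mat3} (hB : B.PosDef) {u : Vec3} (hu : u ≠ 0) {p : Vec3}
    (hp : p ∉ Submodule.span ℝ ({u} : Set Vec3)) :
    (u ⬝ᵥ B.mulVec p) ^ 2 < quadForm B u * quadForm B p := by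
  have hsym : Bᵀ = B := hB.1
  have hQu : 0 < quadForm B u := by
    have := hB.dotProduct_mulVec_pos hu; simpa [quadForm] using this
  set s := u ⬝ᵥ B.mulVec p with hs
  have hv : quadForm B u • p - s • u ≠ 0 := by
    intro h0
    apply hp
    rw [Submodule.mem_span_singleton]
    refine ⟨(quadForm B u)⁻¹ * s, ?_⟩
    have h1 : quadForm B u • p = s • u := by
      have := sub_eq_zero.mp h0; linear_combination (norm := module) this
    have := congrArg (fun v => (quadForm B u)⁻¹ • v) h1
    simp only [smul_smul, inv_mul_cancel₀ hQu.ne', one_smul] at this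
    rw [← this]
  have hpos : 0 < quadForm B (quadForm B u • p - s • u) := by
    have := hB.dotProduct_mulVec_pos hv; simpa [quadForm] using this
  have hexp := my_quad_expand hsym (quadForm B u) s p u
  rw [hexp] at hpos
  nlinarith [hpos, hQu]


set_option maxHeartbeats 1000000 in
/-- the Fuchsian condition forces hᵀAh < (det A)/2, A = B⁻¹. -/
theorem fuchs_magnetic_bound (f : Vec3 → ℝ) (h : Vec3)
    (hmeas : Measurable f) (hnonneg : ∀ p, 0 ≤ f p) (hne : ¬ f =ᵐ[volume] 0)
    (hint : Integrable (fun p : Vec3 => enorm3 p * f p))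
    (B : Mat3) (hB : B.PosDef) (hF : FuchsCond f h B) :
    h ⬝ᵥ (B⁻¹).mulVec h < (B⁻¹).det / 2 := by
  classical
  have hsym : Bᵀ = B := hB.1
  have hdetB : 0 < B.det := hB.det_pos
  have hA : (B⁻¹).PosDef := hB.inv
  have hFu : (2:ℝ) • PsiM f B =
      B⁻¹ - (2 / (B⁻¹).det) •
        ((h ⬝ᵥ (B⁻¹).mulVec h) • B⁻¹
          - (2:ℝ) • vecMulVec ((B⁻¹).mulVec h) ((B⁻¹).mulVec h)) := hF
  set A := B⁻¹ with hA_def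
  have hdA : 0 < A.det := hA.det_pos
  have hBA : B * A = 1 := Matrix.mul_nonsing_inv B hdetB.ne'.isUnit
  -- trivial case h = 0
  by_cases hh : h = 0
  · subst hh
    simpa using half_pos hdA
  set u := A.mulVec h with hu_def
  set α := h ⬝ᵥ u with hα_def
  have hα_pos : 0 < α := by
    have := hA.dotProduct_mulVec_pos hh
    simpa [hα_def, hu_def] using this
  -- basic vector identities
  have hkey : ∀ x p : Vec3, (A.mulVec x) ⬝ᵥ B.mulVec p = x ⬝ᵥ p := by
    intro x p
    rw [dotProduct_mulVec, ← hsym, vecMul_transpose, Matrix.mulVec_mulVec, hBA,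
      Matrix.one_mulVec]
  have hBu : B.mulVec u = h := by
    rw [hu_def, Matrix.mulVec_mulVec, hBA, Matrix.one_mulVec]
  have hu0 : u ≠ 0 := by
    intro h0
    apply hh
    rw [← hBu, h0, Matrix.mulVec_zero]
  have hhp : ∀ p, u ⬝ᵥ B.mulVec p = h ⬝ᵥ p := fun p => by rw [hu_def, hkey]
  have hQu : quadForm B u = α := by
    show u ⬝ᵥ B.mulVec u = α
    rw [hBu, dotProduct_comm]
  -- quadratic form positivity etc.
  have hQnn : ∀ p, 0 ≤ quadForm B p := fun p => by
    have := hB.posSemidef.dotProduct_mulVec_nonneg p; simpa [quadForm] using this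
  have hQpos : ∀ p, p ≠ 0 → 0 < quadForm B p := fun p hp => by
    have := hB.dotProduct_mulVec_pos hp; simpa [quadForm] using this
  have hGnn : ∀ p, 0 ≤ (Real.sqrt (quadForm B p))⁻¹ := fun p =>
    inv_nonneg.2 (Real.sqrt_nonneg _)
  have hGQ : ∀ p, (Real.sqrt (quadForm B p))⁻¹ * quadForm B p = Real.sqrt (quadForm B p) := by
    intro p
    rcases (hQnn p).eq_or_lt with h0 | h0
    · rw [← h0]; simp
    · rw [inv_mul_eq_div, Real.div_sqrt]
  have hGs : ∀ p, (Real.sqrt (quadForm B p))⁻¹ * Real.sqrt (quadForm B p) ≤ 1 := by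
    intro p
    rcases (hQnn p).eq_or_lt with h0 | h0
    · rw [← h0]; simp
    · rw [inv_mul_cancel₀ (Real.sqrt_pos.2 h0).ne']
  -- upper bound  √Q ≤ √c1 * enorm3
  set c1 := ∑ i, ∑ j, |B i j| with hc1_def
  have hc1nn : 0 ≤ c1 :=
    Finset.sum_nonneg fun i _ => Finset.sum_nonneg fun j _ => abs_nonneg _
  have hQle : ∀ p, quadForm B p ≤ c1 * enorm3 p ^ 2 := by
    intro p
    rw [quadForm, my_dot_mulVec, hc1_def, Finset.sum_mul]
    refine Finset.sum_le_sum fun i _ => ?_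
    rw [Finset.sum_mul]
    refine Finset.sum_le_sum fun j _ => ?_
    calc p i * (B i j * p j) ≤ |p i * (B i j * p j)| := le_abs_self _
      _ = |B i j| * (|p i| * |p j|) := by rw [abs_mul, abs_mul]; ring
      _ ≤ |B i j| * (enorm3 p * enorm3 p) := by
          exact mul_le_mul_of_nonneg_left
            (mul_le_mul (my_abs_le_enorm3 p i) (my_abs_le_enorm3 p j) (abs_nonneg _)
              (my_enorm3_nonneg p)) (abs_nonneg _)
      _ = |B i j| * enorm3 p ^ 2 := by ring
  have hsqrtQle : ∀ p, Real.sqrt (quadForm B p) ≤ Real.sqrt c1 * enorm3 p := by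
    intro p
    calc Real.sqrt (quadForm B p) ≤ Real.sqrt (c1 * enorm3 p ^ 2) := Real.sqrt_le_sqrt (hQle p)
      _ = Real.sqrt c1 * enorm3 p := by
          rw [Real.sqrt_mul hc1nn, Real.sqrt_sq (my_enorm3_nonneg p)]
  -- lower bound  enorm3 ≤ √trA * √Q
  have hAii : ∀ i, quadForm B (A.mulVec (Pi.single i 1)) = A i i := by
    intro i
    show (A.mulVec (Pi.single i 1)) ⬝ᵥ B.mulVec (A.mulVec (Pi.single i 1)) = A i i
    rw [hkey, single_dotProduct, Matrix.mulVec_single]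
    simp
  have hlow : ∀ p, ∑ i, p i ^ 2 ≤ A.trace * quadForm B p := by
    intro p
    have htr : A.trace = ∑ i, A i i := by simp [Matrix.trace, Matrix.diag]
    rw [htr, Finset.sum_mul]
    refine Finset.sum_le_sum fun i _ => ?_
    have h1 := my_cs hB (A.mulVec (Pi.single i 1)) p
    rw [hkey, hAii, single_dotProduct, one_mul] at h1
    exact h1
  have htrAnn : 0 ≤ A.trace := by
    have h1 : ∀ i, 0 ≤ A i i := fun i => by
      have := hA.posSemidef.dotProduct_mulVec_nonneg (Pi.single i 1)
      simpa [single_dotProduct, Matrix.mulVec_single] using this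
    have htr : A.trace = ∑ i, A i i := by simp [Matrix.trace, Matrix.diag]
    rw [htr]; exact Finset.sum_nonneg fun i _ => h1 i
  have henle : ∀ p, enorm3 p ≤ Real.sqrt A.trace * Real.sqrt (quadForm B p) := by
    intro p
    calc enorm3 p = Real.sqrt (∑ i, p i ^ 2) := rfl
      _ ≤ Real.sqrt (A.trace * quadForm B p) := Real.sqrt_le_sqrt (hlow p)
      _ = Real.sqrt A.trace * Real.sqrt (quadForm B p) := Real.sqrt_mul htrAnn _
  -- Cauchy–Schwarz against h
  have hCSh : ∀ p, (h ⬝ᵥ p) ^ 2 ≤ α * quadForm B p := by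
    intro p
    have h1 := my_cs hB u p
    rwa [hhp p, hQu] at h1
  -- measurability of integrands
  have hmG : Measurable fun p : Vec3 => (Real.sqrt (quadForm B p))⁻¹ :=
    (my_measurable_quadForm B).sqrt.inv
  have hmdot : Measurable fun p : Vec3 => h ⬝ᵥ p := by
    have : (fun p : Vec3 => h ⬝ᵥ p) = fun p => ∑ i, h i * p i := rfl
    rw [this]
    exact Finset.measurable_sum _ fun i _ => measurable_const.mul (measurable_pi_apply i)
  -- integrability via domination
  have hdom : ∀ (φ : Vec3 → ℝ) (C : ℝ), Measurable φ →
      (∀ p, |φ p| ≤ C * (enorm3 p * f p)) → Integrable φ := by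
    intro φ C hm hb
    refine (hint.const_mul C).mono hm.aestronglyMeasurable (Eventually.of_forall fun p => ?_)
    rw [Real.norm_eq_abs, Real.norm_eq_abs]
    exact (hb p).trans (le_abs_self _)
  have int1 : ∀ i j, Integrable fun p : Vec3 =>
      (Real.sqrt (quadForm B p))⁻¹ * (p i * p j * f p) := by
    intro i j
    refine hdom _ (Real.sqrt A.trace)
      (hmG.mul (((measurable_pi_apply i).mul (measurable_pi_apply j)).mul hmeas)) fun p => ?_
    have e1 : |(Real.sqrt (quadForm B p))⁻¹ * (p i * p j * f p)|
        = (Real.sqrt (quadForm B p))⁻¹ * ((|p i| * |p j|) * f p) := by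
      rw [abs_mul, abs_of_nonneg (hGnn p), abs_mul, abs_mul, abs_of_nonneg (hnonneg p)]
    rw [e1]
    have e2 : (Real.sqrt (quadForm B p))⁻¹ * (|p i| * |p j|)
        ≤ Real.sqrt A.trace * enorm3 p := by
      calc (Real.sqrt (quadForm B p))⁻¹ * (|p i| * |p j|)
          ≤ (Real.sqrt (quadForm B p))⁻¹ * (enorm3 p * enorm3 p) :=
            mul_le_mul_of_nonneg_left
              (mul_le_mul (my_abs_le_enorm3 p i) (my_abs_le_enorm3 p j) (abs_nonneg _)
                (my_enorm3_nonneg p)) (hGnn p)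
        _ ≤ (Real.sqrt (quadForm B p))⁻¹
              * ((Real.sqrt A.trace * Real.sqrt (quadForm B p)) * enorm3 p) :=
            mul_le_mul_of_nonneg_left
              (mul_le_mul_of_nonneg_right (henle p) (my_enorm3_nonneg p)) (hGnn p)
        _ = (Real.sqrt A.trace * enorm3 p)
              * ((Real.sqrt (quadForm B p))⁻¹ * Real.sqrt (quadForm B p)) := by ring
        _ ≤ (Real.sqrt A.trace * enorm3 p) * 1 :=
            mul_le_mul_of_nonneg_left (hGs p)
              (mul_nonneg (Real.sqrt_nonneg _) (my_enorm3_nonneg p))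
        _ = Real.sqrt A.trace * enorm3 p := by ring
    calc (Real.sqrt (quadForm B p))⁻¹ * ((|p i| * |p j|) * f p)
        = ((Real.sqrt (quadForm B p))⁻¹ * (|p i| * |p j|)) * f p := by ring
      _ ≤ (Real.sqrt A.trace * enorm3 p) * f p := mul_le_mul_of_nonneg_right e2 (hnonneg p)
      _ = Real.sqrt A.trace * (enorm3 p * f p) := by ring
  have intS : Integrable fun p : Vec3 => Real.sqrt (quadForm B p) * f p := by
    refine hdom _ (Real.sqrt c1) ((my_measurable_quadForm B).sqrt.mul hmeas) fun p => ?_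
    rw [abs_mul, abs_of_nonneg (Real.sqrt_nonneg _), abs_of_nonneg (hnonneg p)]
    calc Real.sqrt (quadForm B p) * f p ≤ (Real.sqrt c1 * enorm3 p) * f p :=
        mul_le_mul_of_nonneg_right (hsqrtQle p) (hnonneg p)
      _ = Real.sqrt c1 * (enorm3 p * f p) := by ring
  have hGC : ∀ p, (Real.sqrt (quadForm B p))⁻¹ * (h ⬝ᵥ p) ^ 2
      ≤ α * Real.sqrt (quadForm B p) := by
    intro p
    calc (Real.sqrt (quadForm B p))⁻¹ * (h ⬝ᵥ p) ^ 2
        ≤ (Real.sqrt (quadForm B p))⁻¹ * (α * quadForm B p) :=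
          mul_le_mul_of_nonneg_left (hCSh p) (hGnn p)
      _ = α * ((Real.sqrt (quadForm B p))⁻¹ * quadForm B p) := by ring
      _ = α * Real.sqrt (quadForm B p) := by rw [hGQ]
  have intJ : Integrable fun p : Vec3 =>
      (Real.sqrt (quadForm B p))⁻¹ * ((h ⬝ᵥ p) ^ 2 * f p) := by
    refine hdom _ (α * Real.sqrt c1) (hmG.mul ((hmdot.pow_const 2).mul hmeas)) fun p => ?_
    rw [abs_mul, abs_of_nonneg (hGnn p), abs_mul, abs_of_nonneg (sq_nonneg _),
      abs_of_nonneg (hnonneg p)]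
    calc (Real.sqrt (quadForm B p))⁻¹ * ((h ⬝ᵥ p) ^ 2 * f p)
        = ((Real.sqrt (quadForm B p))⁻¹ * (h ⬝ᵥ p) ^ 2) * f p := by ring
      _ ≤ (α * Real.sqrt (quadForm B p)) * f p :=
          mul_le_mul_of_nonneg_right (hGC p) (hnonneg p)
      _ ≤ (α * (Real.sqrt c1 * enorm3 p)) * f p :=
          mul_le_mul_of_nonneg_right
            (mul_le_mul_of_nonneg_left (hsqrtQle p) hα_pos.le) (hnonneg p)
      _ = α * Real.sqrt c1 * (enorm3 p * f p) := by ring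
  -- constant in Ψ
  set c := 4 * π * Real.sqrt B.det with hc_def
  have hc_pos : 0 < c := by
    rw [hc_def]
    exact mul_pos (mul_pos (by norm_num) Real.pi_pos) (Real.sqrt_pos.2 hdetB)
  have hPsi_apply : ∀ i j, PsiM f B i j
      = c * ∫ p : Vec3, (Real.sqrt (quadForm B p))⁻¹ * (p i * p j * f p) := fun i j => rfl
  -- interchange of finite sum and integral
  have hsum : ∀ w : Fin 3 → Fin 3 → ℝ,
      (∫ p : Vec3, ∑ i, ∑ j, w i j * ((Real.sqrt (quadForm B p))⁻¹ * (p i * p j * f p)))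
        = ∑ i, ∑ j, w i j * ∫ p : Vec3, (Real.sqrt (quadForm B p))⁻¹ * (p i * p j * f p) := by
    intro w
    have hterm : ∀ i j, Integrable fun p : Vec3 =>
        w i j * ((Real.sqrt (quadForm B p))⁻¹ * (p i * p j * f p)) :=
      fun i j => (int1 i j).const_mul _
    rw [integral_finset_sum _ fun i _ => integrable_finset_sum _ fun j _ => hterm i j]
    refine Finset.sum_congr rfl fun i _ => ?_
    rw [integral_finset_sum _ fun j _ => hterm i j]
    exact Finset.sum_congr rfl fun j _ => integral_const_mul _ _
  -- h-contraction of Ψ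
  have hPsih : h ⬝ᵥ (PsiM f B).mulVec h
      = c * ∫ p : Vec3, (Real.sqrt (quadForm B p))⁻¹ * ((h ⬝ᵥ p) ^ 2 * f p) := by
    rw [my_dot_mulVec]
    calc ∑ i, ∑ j, h i * (PsiM f B i j * h j)
        = ∑ i, ∑ j, c * ((h i * h j)
            * ∫ p : Vec3, (Real.sqrt (quadForm B p))⁻¹ * (p i * p j * f p)) :=
          Finset.sum_congr rfl fun i _ => Finset.sum_congr rfl fun j _ => by
            rw [hPsi_apply]; ring
      _ = c * ∑ i, ∑ j, (h i * h j)
            * ∫ p : Vec3, (Real.sqrt (quadForm B p))⁻¹ * (p i * p j * f p) := by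
          rw [Finset.mul_sum]
          exact Finset.sum_congr rfl fun i _ => (Finset.mul_sum _ _ _).symm
      _ = c * ∫ p : Vec3, ∑ i, ∑ j,
            (h i * h j) * ((Real.sqrt (quadForm B p))⁻¹ * (p i * p j * f p)) := by
          rw [hsum fun i j => h i * h j]
      _ = c * ∫ p : Vec3, (Real.sqrt (quadForm B p))⁻¹ * ((h ⬝ᵥ p) ^ 2 * f p) := by
          congr 1
          refine integral_congr_ae (Eventually.of_forall fun p => ?_)
          beta_reduce
          have hd : (h ⬝ᵥ p) ^ 2 = ∑ i, ∑ j, (h i * p i) * (h j * p j) := by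
            rw [sq, show (h ⬝ᵥ p) = ∑ i, h i * p i from rfl]
            exact Finset.sum_mul_sum _ _ _ _
          rw [hd]
          simp only [Finset.mul_sum, Finset.sum_mul]
          exact Finset.sum_congr rfl fun i _ => Finset.sum_congr rfl fun j _ => by ring
  -- B-trace of Ψ
  have hQsum : ∀ p : Vec3, quadForm B p = ∑ i, ∑ j, B j i * (p i * p j) := by
    intro p
    rw [quadForm, my_dot_mulVec]
    refine Finset.sum_congr rfl fun i _ => Finset.sum_congr rfl fun j _ => ?_
    have hb : B j i = B i j := by
      have h1 := congrFun (congrFun hsym j) i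
      simpa [Matrix.transpose_apply] using h1.symm
    rw [hb]; ring
  have hTrPsi : (B * PsiM f B).trace
      = c * ∫ p : Vec3, Real.sqrt (quadForm B p) * f p := by
    rw [my_trace_mul]
    calc ∑ i, ∑ j, B i j * PsiM f B j i
        = ∑ j, ∑ i, B i j * PsiM f B j i := Finset.sum_comm
      _ = ∑ i, ∑ j, B j i * PsiM f B i j := rfl
      _ = ∑ i, ∑ j, c * (B j i
            * ∫ p : Vec3, (Real.sqrt (quadForm B p))⁻¹ * (p i * p j * f p)) :=
          Finset.sum_congr rfl fun i _ => Finset.sum_congr rfl fun j _ => by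
            rw [hPsi_apply]; ring
      _ = c * ∑ i, ∑ j, B j i
            * ∫ p : Vec3, (Real.sqrt (quadForm B p))⁻¹ * (p i * p j * f p) := by
          rw [Finset.mul_sum]
          exact Finset.sum_congr rfl fun i _ => (Finset.mul_sum _ _ _).symm
      _ = c * ∫ p : Vec3, ∑ i, ∑ j,
            B j i * ((Real.sqrt (quadForm B p))⁻¹ * (p i * p j * f p)) := by
          rw [hsum fun i j => B j i]
      _ = c * ∫ p : Vec3, Real.sqrt (quadForm B p) * f p := by
          congr 1
          refine integral_congr_ae (Eventually.of_forall fun p => ?_)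
          beta_reduce
          have e3 : ∀ g : ℝ, ∑ i, ∑ j, B j i * (g * (p i * p j * f p))
              = g * quadForm B p * f p := by
            intro g
            rw [hQsum p]
            simp only [Finset.mul_sum, Finset.sum_mul]
            exact Finset.sum_congr rfl fun i _ => Finset.sum_congr rfl fun j _ => by ring
          rw [e3, hGQ p]
  -- contract the Fuchsian equation with h and with B-trace
  have hhu : h ⬝ᵥ u = α := hα_def.symm
  have huh : u ⬝ᵥ h = α := (dotProduct_comm u h).trans hhu
  have hvmv : ∀ x : Vec3, (vecMulVec u u).mulVec x = (u ⬝ᵥ x) • u := by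
    intro x; funext i
    show ∑ j, u i * u j * x j = (∑ j, u j * x j) * u i
    rw [Finset.sum_mul]
    exact Finset.sum_congr rfl fun j _ => by ring
  have htruu : (B * vecMulVec u u).trace = α := by
    have h1 : (B * vecMulVec u u).trace = u ⬝ᵥ B.mulVec u := by
      rw [my_trace_mul, my_dot_mulVec]
      exact Finset.sum_congr rfl fun i _ => Finset.sum_congr rfl fun j _ => by
        rw [Matrix.vecMulVec_apply]; ring
    rw [h1]
    exact hQu
  have e1 := congrArg (fun M : Mat3 => h ⬝ᵥ M.mulVec h) hFu
  simp only [Matrix.smul_mulVec, dotProduct_smul, Matrix.sub_mulVec, dotProduct_sub,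
    smul_eq_mul, hvmv, ← hu_def, hhu, huh, hPsih] at e1
  have e2 := congrArg (fun M : Mat3 => (B * M).trace) hFu
  simp only [Matrix.mul_smul, Matrix.trace_smul, Matrix.mul_sub, Matrix.trace_sub,
    smul_eq_mul, hBA, Matrix.trace_one, Fintype.card_fin, Nat.cast_ofNat,
    hTrPsi, htruu] at e2
  -- strict inequality between the two integrals
  have hCSstrict : ∀ p : Vec3, p ∉ Submodule.span ℝ ({u} : Set Vec3) →
      (h ⬝ᵥ p) ^ 2 < α * quadForm B p := by
    intro p hp
    have h1 := my_cs_strict hB hu0 hp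
    rwa [hhp p, hQu] at h1
  set φ := fun p : Vec3 => α * (Real.sqrt (quadForm B p) * f p)
    - (Real.sqrt (quadForm B p))⁻¹ * ((h ⬝ᵥ p) ^ 2 * f p) with hφ_def
  have hφnn : 0 ≤ φ := by
    intro p
    simp only [hφ_def, Pi.zero_apply]
    rw [sub_nonneg]
    calc (Real.sqrt (quadForm B p))⁻¹ * ((h ⬝ᵥ p) ^ 2 * f p)
        = ((Real.sqrt (quadForm B p))⁻¹ * (h ⬝ᵥ p) ^ 2) * f p := by ring
      _ ≤ (α * Real.sqrt (quadForm B p)) * f p :=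
          mul_le_mul_of_nonneg_right (hGC p) (hnonneg p)
      _ = α * (Real.sqrt (quadForm B p) * f p) := by ring
  have hφint : Integrable φ := (intS.const_mul α).sub intJ
  have hspan0 : volume ((Submodule.span ℝ ({u} : Set Vec3) : Submodule ℝ Vec3) : Set Vec3)
      = 0 := by
    refine Measure.addHaar_submodule _ _ ?_
    intro htop
    have h1 : Module.finrank ℝ (Submodule.span ℝ ({u} : Set Vec3)) = 1 :=
      finrank_span_singleton hu0
    rw [htop, finrank_top] at h1
    have h2 : Module.finrank ℝ Vec3 = 3 := by simp
    rw [h2] at h1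
    norm_num at h1
  have hsubset : Function.support f
        \ ((Submodule.span ℝ ({u} : Set Vec3) : Submodule ℝ Vec3) : Set Vec3)
      ⊆ Function.support φ := by
    rintro p ⟨hpf, hps⟩
    have hfp : 0 < f p := lt_of_le_of_ne (hnonneg p) (Ne.symm hpf)
    have hp0 : p ≠ 0 := fun h0 => hps (by rw [h0]; exact Submodule.zero_mem _)
    have hQp : 0 < quadForm B p := hQpos p hp0
    have hGp : 0 < (Real.sqrt (quadForm B p))⁻¹ := inv_pos.2 (Real.sqrt_pos.2 hQp)
    have hlt : (Real.sqrt (quadForm B p))⁻¹ * (h ⬝ᵥ p) ^ 2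
        < α * Real.sqrt (quadForm B p) := by
      calc (Real.sqrt (quadForm B p))⁻¹ * (h ⬝ᵥ p) ^ 2
          < (Real.sqrt (quadForm B p))⁻¹ * (α * quadForm B p) :=
            mul_lt_mul_of_pos_left (hCSstrict p hps) hGp
        _ = α * ((Real.sqrt (quadForm B p))⁻¹ * quadForm B p) := by ring
        _ = α * Real.sqrt (quadForm B p) := by rw [hGQ]
    have hφeq : φ p = (α * Real.sqrt (quadForm B p)
        - (Real.sqrt (quadForm B p))⁻¹ * (h ⬝ᵥ p) ^ 2) * f p := by
      rw [hφ_def]; ring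
    have hφp : 0 < φ p := by
      rw [hφeq]
      exact mul_pos (sub_pos.2 hlt) hfp
    exact Function.mem_support.2 hφp.ne'
  have hsupp : 0 < volume (Function.support φ) := by
    have h2 : 0 < volume (Function.support f) := by
      rw [pos_iff_ne_zero]
      intro h0
      apply hne
      rw [Filter.EventuallyEq, ae_iff]
      simpa [Function.support] using h0
    calc 0 < volume (Function.support f) := h2
      _ = volume (Function.support f
            \ ((Submodule.span ℝ ({u} : Set Vec3) : Submodule ℝ Vec3) : Set Vec3)) :=
          (measure_diff_null hspan0).symm
      _ ≤ volume (Function.support φ) := measure_mono hsubset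
  have hposφ : 0 < ∫ p : Vec3, φ p :=
    (integral_pos_iff_support_of_nonneg hφnn hφint).2 hsupp
  have hJS : (∫ p : Vec3, (Real.sqrt (quadForm B p))⁻¹ * ((h ⬝ᵥ p) ^ 2 * f p))
      < α * ∫ p : Vec3, Real.sqrt (quadForm B p) * f p := by
    have heq : ∫ p : Vec3, φ p
        = α * (∫ p : Vec3, Real.sqrt (quadForm B p) * f p)
          - ∫ p : Vec3, (Real.sqrt (quadForm B p))⁻¹ * ((h ⬝ᵥ p) ^ 2 * f p) := by
      rw [hφ_def, integral_sub (intS.const_mul α) intJ, integral_const_mul]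
    linarith [hposφ, heq]
  -- final arithmetic
  set S := ∫ p : Vec3, Real.sqrt (quadForm B p) * f p with hS_def
  set J := ∫ p : Vec3, (Real.sqrt (quadForm B p))⁻¹ * ((h ⬝ᵥ p) ^ 2 * f p) with hJ_def
  clear_value S J c α
  have key : (2 * c) * J < (2 * c) * (α * S) :=
    mul_lt_mul_of_pos_left hJS (by positivity)
  have hd : 0 < 2 / A.det := by positivity
  have hd2 : (2 / A.det) * A.det = 2 := by field_simp
  have e2α := congrArg (fun t : ℝ => α * t) e2
  have i1 : (2 / A.det) * α ^ 2 < α := by nlinarith [key, e1, e2α]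
  have h2a : 2 * α ^ 2 < α * A.det := by nlinarith [mul_lt_mul_of_pos_right i1 hdA, hd2]
  have h3 : 2 * α < A.det := by nlinarith [h2a, hα_pos]
  linarith
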